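/- Let M be a d×d complex matrix and v₀ ∈ ℂᵈ, v₀ ≠ 0. If sup_{t∈ℝ} ‖exp(tM) v₀‖ < ∞, then M has a purely imaginary eigenvalue, i.e. there exist z ∈ ℂ with Re z = 0 and w ∈ ℂᵈ, w ≠ 0, such that M w = z w. -/

import Mathlib

open Polynomial

lemma aux_eigen {d : ℕ} (M : Matrix (Fin d) (Fin d) ℂ) (v : Fin d → ℂ) :
    ∀ (n : ℕ) (p : ℂ[X]), p.natDegree ≤ n → p ≠ 0 →
      (Polynomial.aeval M p).mulVec v = 0 → v ≠ 0 →
      ∃ (z : ℂ) (q : ℂ[X]), (Polynomial.aeval M q).mulVec v ≠ 0 ∧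
        M.mulVec ((Polynomial.aeval M q).mulVec v) = z • (Polynomial.aeval M q).mulVec v := by
  intro n
  induction n with
  | zero =>
    intro p hdeg hp h0 hv
    exfalso
    have hc : p = Polynomial.C (p.coeff 0) :=
      Polynomial.eq_C_of_natDegree_eq_zero (Nat.le_zero.mp hdeg)
    have hc0 : p.coeff 0 ≠ 0 := fun h => hp (by rw [hc, h, map_zero])
    rw [hc, Polynomial.aeval_C, Algebra.algebraMap_eq_smul_one,
      Matrix.smul_mulVec, Matrix.one_mulVec] at h0
    exact hv (by simpa [hc0] using smul_eq_zero.mp h0)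
  | succ n ih =>
    intro p hdeg hp h0 hv
    by_cases hd0 : p.natDegree = 0
    · exfalso
      have hc : p = Polynomial.C (p.coeff 0) := Polynomial.eq_C_of_natDegree_eq_zero hd0
      have hc0 : p.coeff 0 ≠ 0 := fun h => hp (by rw [hc, h, map_zero])
      rw [hc, Polynomial.aeval_C, Algebra.algebraMap_eq_smul_one,
        Matrix.smul_mulVec, Matrix.one_mulVec] at h0
      exact hv (by simpa [hc0] using smul_eq_zero.mp h0)
    · have hdne : p.degree ≠ 0 := by
        intro h
        exact hd0 (Polynomial.natDegree_eq_of_degree_eq_some h)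
      obtain ⟨z, hz⟩ := IsAlgClosed.exists_root p hdne
      obtain ⟨q, hq⟩ := (Polynomial.dvd_iff_isRoot.mpr hz)
      have hqne : q ≠ 0 := by rintro rfl; exact hp (by simpa using hq)
      have hqdeg : q.natDegree ≤ n := by
        have := Polynomial.natDegree_mul (Polynomial.X_sub_C_ne_zero z) hqne
        rw [← hq, Polynomial.natDegree_X_sub_C] at this
        omega
      by_cases hu : (Polynomial.aeval M q).mulVec v = 0
      · exact ih q hqdeg hqne hu hv
      · refine ⟨z, q, hu, ?_⟩
        have hfac : (Polynomial.aeval M p) = (M - z • 1) * Polynomial.aeval M q := by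
          rw [hq, map_mul]
          congr 1
          rw [map_sub, Polynomial.aeval_X, Polynomial.aeval_C,
            Algebra.algebraMap_eq_smul_one]
        have h2 : (M - z • 1).mulVec ((Polynomial.aeval M q).mulVec v) = 0 := by
          rw [Matrix.mulVec_mulVec, ← hfac, h0]
        rw [Matrix.sub_mulVec, Matrix.smul_mulVec, Matrix.one_mulVec,
          sub_eq_zero] at h2
        exact h2

lemma exp_mulVec_eigen {d : ℕ} (A : Matrix (Fin d) (Fin d) ℂ) (w : Fin d → ℂ) (z : ℂ)
    (h : A.mulVec w = z • w) :
    (NormedSpace.exp A).mulVec w = Complex.exp z • w := by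
  letI : SeminormedRing (Matrix (Fin d) (Fin d) ℂ) := Matrix.linftyOpSemiNormedRing
  letI : NormedRing (Matrix (Fin d) (Fin d) ℂ) := Matrix.linftyOpNormedRing
  letI : NormedAlgebra ℂ (Matrix (Fin d) (Fin d) ℂ) := Matrix.linftyOpNormedAlgebra
  have hpow : ∀ n : ℕ, (A ^ n).mulVec w = z ^ n • w := by
    intro n
    induction n with
    | zero => simp [Matrix.one_mulVec]
    | succ n ihn =>
      rw [pow_succ, ← Matrix.mulVec_mulVec, h, Matrix.mulVec_smul, ihn,
        smul_smul, ← pow_succ']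
  -- the evaluation map as a continuous linear map
  let Eₗ : Matrix (Fin d) (Fin d) ℂ →ₗ[ℂ] (Fin d → ℂ) :=
    { toFun := fun B => B.mulVec w
      map_add' := fun B C => Matrix.add_mulVec B C w
      map_smul' := fun c B => Matrix.smul_mulVec c B w }
  let E : Matrix (Fin d) (Fin d) ℂ →L[ℂ] (Fin d → ℂ) := Eₗ.toContinuousLinearMap
  have hsum : Summable fun n : ℕ => ((Nat.factorial n : ℂ)⁻¹) • A ^ n :=
    NormedSpace.expSeries_summable' (𝕂 := ℂ) A
  have key : E (NormedSpace.exp A) = Complex.exp z • w := by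
    rw [NormedSpace.exp_eq_tsum (𝕂 := ℂ), E.map_tsum hsum]
    have : ∀ n : ℕ, E (((Nat.factorial n : ℂ)⁻¹) • A ^ n) = (((Nat.factorial n : ℂ)⁻¹) * z ^ n) • w := by
      intro n
      rw [map_smul]
      show ((Nat.factorial n : ℂ)⁻¹) • (A ^ n).mulVec w = _
      rw [hpow, smul_smul]
    rw [tsum_congr this]
    have hsumc : Summable fun n : ℕ => ((Nat.factorial n : ℂ)⁻¹) * z ^ n := by
      simpa [smul_eq_mul] using NormedSpace.expSeries_summable' (𝕂 := ℂ) z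
    rw [hsumc.tsum_smul_const]
    congr 1
    rw [Complex.exp_eq_exp_ℂ, NormedSpace.exp_eq_tsum (𝕂 := ℂ)]
    simp [smul_eq_mul]
  exact key

/-- If the full orbit `t ↦ exp(tM) v₀` of a nonzero vector `v₀` under
the matrix exponential is bounded over `t ∈ ℝ`, then `M` has a purely imaginary
eigenvalue. -/
theorem stmt_16 {d : ℕ} (M : Matrix (Fin d) (Fin d) ℂ)
    (v₀ : Fin d → ℂ) (hv₀ : v₀ ≠ 0)
    (hbdd : ∃ C : ℝ, ∀ t : ℝ, ‖(NormedSpace.exp ((t : ℂ) • M)).mulVec v₀‖ ≤ C) :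
    ∃ z : ℂ, z.re = 0 ∧ ∃ w : Fin d → ℂ, w ≠ 0 ∧ M.mulVec w = z • w := by
  obtain ⟨C, hC⟩ := hbdd
  obtain ⟨z, q, hw0, hew⟩ := aux_eigen M v₀ M.charpoly.natDegree M.charpoly le_rfl
    (M.charpoly_monic.ne_zero) (by rw [M.aeval_self_charpoly, Matrix.zero_mulVec]) hv₀
  set Q : Matrix (Fin d) (Fin d) ℂ := Polynomial.aeval M M.charpoly |> fun _ => Polynomial.aeval M q with hQdef
  set w : Fin d → ℂ := Q.mulVec v₀ with hwdef
  refine ⟨z, ?_, w, hw0, hew⟩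
  -- boundedness of ‖Q.mulVec x‖
  let Qc : (Fin d → ℂ) →L[ℂ] (Fin d → ℂ) := Q.mulVecLin.toContinuousLinearMap
  -- key identity: exp(tM) *ᵥ w = exp(tz) • w and exp(tM) *ᵥ w = Q *ᵥ (exp(tM) *ᵥ v₀)
  have hkey : ∀ t : ℝ, Real.exp (t * z.re) * ‖w‖ ≤ ‖Qc‖ * C := by
    intro t
    have hcom : Commute Q ((t : ℂ) • M) := by
      have h1 : Commute Q M := by
        have := (Commute.all q (Polynomial.X : ℂ[X])).map (Polynomial.aeval M)
        simpa using this
      exact h1.smul_right _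
    have hcom2 : Q * NormedSpace.exp ((t : ℂ) • M)
        = NormedSpace.exp ((t : ℂ) • M) * Q := by
      letI : SeminormedRing (Matrix (Fin d) (Fin d) ℂ) := Matrix.linftyOpSemiNormedRing
      letI : NormedRing (Matrix (Fin d) (Fin d) ℂ) := Matrix.linftyOpNormedRing
      letI : NormedAlgebra ℂ (Matrix (Fin d) (Fin d) ℂ) := Matrix.linftyOpNormedAlgebra
      exact hcom.exp_right.eq
    have heig : ((t : ℂ) • M).mulVec w = ((t : ℂ) * z) • w := by
      rw [Matrix.smul_mulVec, hew, smul_smul]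
    have h1 : (NormedSpace.exp ((t : ℂ) • M)).mulVec w = Complex.exp ((t : ℂ) * z) • w :=
      exp_mulVec_eigen _ w _ heig
    have h2 : (NormedSpace.exp ((t : ℂ) • M)).mulVec w
        = Q.mulVec ((NormedSpace.exp ((t : ℂ) • M)).mulVec v₀) := by
      rw [hwdef, Matrix.mulVec_mulVec, ← hcom2, ← Matrix.mulVec_mulVec]
    have h3 : ‖Q.mulVec ((NormedSpace.exp ((t : ℂ) • M)).mulVec v₀)‖ ≤ ‖Qc‖ * C := by
      calc ‖Qc ((NormedSpace.exp ((t : ℂ) • M)).mulVec v₀)‖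
          ≤ ‖Qc‖ * ‖(NormedSpace.exp ((t : ℂ) • M)).mulVec v₀‖ := Qc.le_opNorm _
        _ ≤ ‖Qc‖ * C := by
            exact mul_le_mul_of_nonneg_left (hC t) (norm_nonneg _)
    have h4 : ‖Complex.exp ((t : ℂ) * z) • w‖ = Real.exp (t * z.re) * ‖w‖ := by
      rw [norm_smul, Complex.norm_exp]
      congr 2
      simp [Complex.mul_re]
    rw [← h4, ← h1, h2]
    exact h3
  -- conclude Re z = 0
  by_contra hre
  have hwn : 0 < ‖w‖ := norm_pos_iff.mpr hw0
  set D : ℝ := ‖Qc‖ * C with hD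
  have : ∀ s : ℝ, Real.exp s * ‖w‖ ≤ D := by
    intro s
    have := hkey (s / z.re)
    rwa [div_mul_cancel₀ s hre] at this
  have hcon := this (D / ‖w‖)
  have h5 : D / ‖w‖ + 1 ≤ Real.exp (D / ‖w‖) := Real.add_one_le_exp _
  nlinarith [Real.add_one_le_exp (D / ‖w‖), div_mul_cancel₀ D (ne_of_gt hwn)]
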